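/- arXiv:2312.01341 — 2 statements merged into one kernel-verified Lean document; each statement's English description precedes it below -/
import Mathlib

section
/- Let u : ℝ² → ℝ² be a continuously differentiable, compactly supported (autonomous) vector field, and let Φ : ℝ × ℝ² → ℝ² be its flow, i.e., Φ(0,x) = x and ∂Φ/∂s(s,x) = u(Φ(s,x)) for all s and x. Let S₁, S₂ : ℝ² → ℝ be continuously differentiable with compact support. Then the function s ↦ ∫_{ℝ²} (S₁(x) − S₂(Φ(−s,x)))² dx is differentiable at s = 0 and its derivative at s = 0 equals ∫_{ℝ²} 2 (S₁(x) − S₂(x)) · (u(x)·∇S₂(x)) dx. -/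
open MeasureTheory

/-- Partial derivative in the first coordinate direction of a scalar field on `ℝ²`. -/
noncomputable def pd1 (f : ℝ × ℝ → ℝ) (x : ℝ × ℝ) : ℝ := fderiv ℝ f x (1, 0)

/-- Partial derivative in the second coordinate direction of a scalar field on `ℝ²`. -/
noncomputable def pd2 (f : ℝ × ℝ → ℝ) (x : ℝ × ℝ) : ℝ := fderiv ℝ f x (0, 1)

/-- **First-order expansion of the residual along the flow (0-form case).**
Let `u` be a `C¹`, compactly supported autonomous vector field on `ℝ²` with flow
`Φ` (`Φ 0 x = x`, `∂Φ/∂s (s,x) = u (Φ s x)`), and let `S₁, S₂` be `C¹` compactly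
supported scalar fields.  Then `s ↦ ∫ (S₁(x) − S₂(Φ(−s,x)))² dx` is
differentiable at `s = 0` with derivative
`∫ 2 (S₁(x) − S₂(x)) (u(x)·∇S₂(x)) dx`. -/
theorem residual_derivative_along_flow_zero_form
    (u : ℝ × ℝ → ℝ × ℝ) (hu : ContDiff ℝ 1 u) (husupp : HasCompactSupport u)
    (Φ : ℝ → ℝ × ℝ → ℝ × ℝ)
    (hΦ0 : ∀ x, Φ 0 x = x)
    (hΦ : ∀ s x, HasDerivAt (fun σ => Φ σ x) (u (Φ s x)) s)
    (S₁ S₂ : ℝ × ℝ → ℝ)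
    (hS₁ : ContDiff ℝ 1 S₁) (hS₂ : ContDiff ℝ 1 S₂)
    (hS₁supp : HasCompactSupport S₁) (hS₂supp : HasCompactSupport S₂) :
    HasDerivAt (fun s : ℝ => ∫ x : ℝ × ℝ, (S₁ x - S₂ (Φ (-s) x)) ^ 2)
      (∫ x : ℝ × ℝ, 2 * (S₁ x - S₂ x) * ((u x).1 * pd1 S₂ x + (u x).2 * pd2 S₂ x))
      0 := by
  classical
  -- Lipschitz constant for `u`
  obtain ⟨K, hK⟩ := hu.lipschitzWith_of_hasCompactSupport husupp one_ne_zero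
  -- sup-norm bounds
  obtain ⟨M, hM⟩ := husupp.exists_bound_of_continuous hu.continuous
  have hM0 : 0 ≤ M := le_trans (norm_nonneg _) (hM 0)
  obtain ⟨B₁, hB₁⟩ := hS₁supp.exists_bound_of_continuous hS₁.continuous
  obtain ⟨B₂, hB₂⟩ := hS₂supp.exists_bound_of_continuous hS₂.continuous
  obtain ⟨L, hL⟩ := (hS₂supp.fderiv ℝ).exists_bound_of_continuous
    (hS₂.continuous_fderiv one_ne_zero)
  have hB₁0 : 0 ≤ B₁ := le_trans (norm_nonneg _) (hB₁ 0)
  have hB₂0 : 0 ≤ B₂ := le_trans (norm_nonneg _) (hB₂ 0)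
  have hL0 : 0 ≤ L := le_trans (norm_nonneg _) (hL 0)
  -- continuity of the flow in time
  have hΦtc : ∀ x : ℝ × ℝ, Continuous fun t => Φ t x := fun x =>
    continuous_iff_continuousAt.2 fun t => (hΦ t x).continuousAt
  -- Gronwall: Lipschitz dependence on initial data
  have key : ∀ (s : ℝ) (x y : ℝ × ℝ),
      dist (Φ s x) (Φ s y) ≤ dist x y * Real.exp (K * |s|) := by
    intro s x y
    rcases le_or_gt 0 s with hs | hs
    · have := dist_le_of_trajectories_ODE (v := fun _ z => u z) (K := K)
        (f := fun t => Φ t x) (g := fun t => Φ t y) (a := 0) (b := s)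
        (δ := dist x y) (fun _ => hK)
        ((hΦtc x).continuousOn)
        (fun t _ => (hΦ t x).hasDerivWithinAt)
        ((hΦtc y).continuousOn)
        (fun t _ => (hΦ t y).hasDerivWithinAt)
        (by simp [hΦ0]) s ⟨hs, le_rfl⟩
      simpa [abs_of_nonneg hs] using this
    · have hf : ∀ t : ℝ, HasDerivAt (fun τ => Φ (-τ) x) (-u (Φ (-t) x)) t := by
        intro t
        have h1 : HasDerivAt (fun τ : ℝ => -τ) (-1 : ℝ) t := (hasDerivAt_id t).neg
        have := (hΦ (-t) x).scomp t h1
        simpa [Function.comp_def] using this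
      have hg : ∀ t : ℝ, HasDerivAt (fun τ => Φ (-τ) y) (-u (Φ (-t) y)) t := by
        intro t
        have h1 : HasDerivAt (fun τ : ℝ => -τ) (-1 : ℝ) t := (hasDerivAt_id t).neg
        have := (hΦ (-t) y).scomp t h1
        simpa [Function.comp_def] using this
      have := dist_le_of_trajectories_ODE (v := fun _ z => -u z) (K := K)
        (f := fun t => Φ (-t) x) (g := fun t => Φ (-t) y) (a := 0) (b := -s)
        (δ := dist x y) (fun _ => hK.neg)
        (continuous_iff_continuousAt.2 fun t => (hf t).continuousAt).continuousOn
        (fun t _ => (hf t).hasDerivWithinAt)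
        (continuous_iff_continuousAt.2 fun t => (hg t).continuousAt).continuousOn
        (fun t _ => (hg t).hasDerivWithinAt)
        (by simp [hΦ0]) (-s) ⟨neg_nonneg.2 hs.le, le_rfl⟩
      simpa [abs_of_neg hs] using this
  -- Spatial continuity of the flow
  have hΦc : ∀ s : ℝ, Continuous (Φ s) := by
    intro s
    have : LipschitzWith (Real.exp (K * |s|)).toNNReal (Φ s) := by
      apply LipschitzWith.of_dist_le_mul
      intro x y
      rw [Real.coe_toNNReal _ (Real.exp_pos _).le]
      calc dist (Φ s x) (Φ s y) ≤ dist x y * Real.exp (K * |s|) := key s x y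
        _ = Real.exp (K * |s|) * dist x y := mul_comm _ _
    exact this.continuous
  -- displacement bound
  have hdisp : ∀ (s : ℝ) (x : ℝ × ℝ), ‖Φ s x - x‖ ≤ M * |s| := by
    intro s x
    have := Convex.norm_image_sub_le_of_norm_hasDerivWithin_le
      (f := fun t => Φ t x) (f' := fun t => u (Φ t x)) (C := M)
      (s := Set.univ)
      (fun t _ => (hΦ t x).hasDerivWithinAt)
      (fun t _ => hM _) convex_univ (Set.mem_univ (0 : ℝ)) (Set.mem_univ s)
    simpa [hΦ0, Real.norm_eq_abs] using this
  -- the compact set carrying all the action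
  set Kset : Set (ℝ × ℝ) := Metric.cthickening M (tsupport u) with hKset
  have hKsetc : IsCompact Kset := husupp.cthickening
  set C : ℝ := 2 * (B₁ + B₂) * (L * M) with hC
  have hC0 : 0 ≤ C := by positivity
  set bound : ℝ × ℝ → ℝ := Kset.indicator fun _ => C with hbound
  -- the family and its derivative
  set F : ℝ → ℝ × ℝ → ℝ := fun s x => (S₁ x - S₂ (Φ (-s) x)) ^ 2 with hF
  set F' : ℝ → ℝ × ℝ → ℝ := fun s x =>
    2 * (S₁ x - S₂ (Φ (-s) x)) * fderiv ℝ S₂ (Φ (-s) x) (u (Φ (-s) x)) with hF'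
  -- pointwise derivative
  have hdiff : ∀ (x : ℝ × ℝ) (s : ℝ), HasDerivAt (fun σ => F σ x) (F' s x) s := by
    intro x s
    have h1 : HasDerivAt (fun σ : ℝ => Φ (-σ) x) (-u (Φ (-s) x)) s := by
      have hneg : HasDerivAt (fun σ : ℝ => -σ) (-1 : ℝ) s := (hasDerivAt_id s).neg
      have := (hΦ (-s) x).scomp s hneg
      simpa [Function.comp_def] using this
    have h2 : HasDerivAt (fun σ : ℝ => S₂ (Φ (-σ) x))
        (fderiv ℝ S₂ (Φ (-s) x) (-u (Φ (-s) x))) s :=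
      ((hS₂.differentiable one_ne_zero _).hasFDerivAt).comp_hasDerivAt s h1
    have h3 := ((hasDerivAt_const s (S₁ x)).sub h2).pow 2
    convert h3 using 1
    · rfl
    · rfl
    · rfl
    simp only [hF', map_neg, Pi.sub_apply]
    ring
  -- apply differentiation under the integral sign
  have main := hasDerivAt_integral_of_dominated_loc_of_deriv_le
    (μ := (volume : Measure (ℝ × ℝ))) (F := F) (F' := F') (x₀ := (0 : ℝ))
    (bound := bound) (s := Metric.ball 0 1) (Metric.ball_mem_nhds 0 one_pos)
    (Filter.Eventually.of_forall fun s =>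
      (((hS₁.continuous.sub (hS₂.continuous.comp (hΦc (-s)))).pow 2)).aestronglyMeasurable)
    (by
      have hFeq : F 0 = fun x => (S₁ x - S₂ x) ^ 2 := by
        funext x; simp [hF, hΦ0]
      rw [hFeq]
      apply Continuous.integrable_of_hasCompactSupport
      · exact (hS₁.continuous.sub hS₂.continuous).pow 2
      · have hsub : HasCompactSupport (fun x => S₁ x - S₂ x) := by
          simpa [sub_eq_add_neg, Function.comp_def, Pi.add_def] using hS₁supp.add (hS₂supp.comp_left (g := fun t : ℝ => -t) neg_zero)
        apply HasCompactSupport.comp_left (g := fun t : ℝ => t ^ 2) hsub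
        simp)
    (by
      have : Continuous (F' 0) := by
        apply Continuous.mul
        · exact (continuous_const.mul
            (hS₁.continuous.sub (hS₂.continuous.comp (hΦc (-0)))))
        · exact ((hS₂.continuous_fderiv one_ne_zero).comp (hΦc (-0))).clm_apply
            (hu.continuous.comp (hΦc (-0)))
      exact this.aestronglyMeasurable)
    (by
      refine Filter.Eventually.of_forall fun x s hs => ?_
      by_cases hy : u (Φ (-s) x) = 0
      · have : F' s x = 0 := by simp [hF', hy]
        rw [this, norm_zero]
        exact Set.indicator_nonneg (fun _ _ => hC0) x
      · have hymem : Φ (-s) x ∈ tsupport u := subset_tsupport u hy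
        have hxmem : x ∈ Kset := by
          apply Metric.mem_cthickening_of_dist_le x (Φ (-s) x) M _ hymem
          have h1 : dist x (Φ (-s) x) = ‖Φ (-s) x - x‖ := by
            rw [dist_comm, dist_eq_norm]
          rw [h1]
          calc ‖Φ (-s) x - x‖ ≤ M * |(-s)| := hdisp (-s) x
            _ ≤ M * 1 := by
                apply mul_le_mul_of_nonneg_left _ hM0
                rw [abs_neg]
                exact le_of_lt (by simpa [Real.dist_eq] using hs)
            _ = M := mul_one M
        have hbx : bound x = C := Set.indicator_of_mem hxmem _
        rw [hbx]
        have ha : |S₁ x - S₂ (Φ (-s) x)| ≤ B₁ + B₂ := by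
          calc |S₁ x - S₂ (Φ (-s) x)| ≤ |S₁ x| + |S₂ (Φ (-s) x)| := abs_sub _ _
            _ ≤ B₁ + B₂ := add_le_add (hB₁ x) (hB₂ _)
        have hb : |fderiv ℝ S₂ (Φ (-s) x) (u (Φ (-s) x))| ≤ L * M := by
          calc |fderiv ℝ S₂ (Φ (-s) x) (u (Φ (-s) x))|
              ≤ ‖fderiv ℝ S₂ (Φ (-s) x)‖ * ‖u (Φ (-s) x)‖ :=
                (fderiv ℝ S₂ (Φ (-s) x)).le_opNorm _
            _ ≤ L * M := mul_le_mul (hL _) (hM _) (norm_nonneg _) hL0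
        calc ‖F' s x‖ = 2 * |S₁ x - S₂ (Φ (-s) x)| *
              |fderiv ℝ S₂ (Φ (-s) x) (u (Φ (-s) x))| := by
              simp [hF', Real.norm_eq_abs, abs_mul]
          _ ≤ 2 * (B₁ + B₂) * (L * M) := by
              apply mul_le_mul _ hb (abs_nonneg _) (by positivity)
              apply mul_le_mul_of_nonneg_left ha (by norm_num)
          _ = C := rfl)
    (by
      rw [hbound, integrable_indicator_iff hKsetc.measurableSet]
      exact integrableOn_const hKsetc.measure_lt_top.ne)
    (Filter.Eventually.of_forall fun x s _ => hdiff x s)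
  refine main.2.congr_deriv ?_
  apply integral_congr_ae
  refine Filter.Eventually.of_forall fun x => ?_
  have hux : u x = (u x).1 • ((1 : ℝ), (0 : ℝ)) + (u x).2 • ((0 : ℝ), (1 : ℝ)) := by
    simp [Prod.ext_iff]
  simp only [hF', neg_zero, hΦ0]
  have hfd : (fderiv ℝ S₂ x) (u x) = (u x).1 * pd1 S₂ x + (u x).2 * pd2 S₂ x := by
    conv_lhs => rw [hux]
    simp only [map_add, ContinuousLinearMap.map_smul, smul_eq_mul]
    rfl
  rw [hfd]
end

section
/- Let u : ℝ² → ℝ² be a continuously differentiable, compactly supported (autonomous) vector field, and let Φ : ℝ × ℝ² → ℝ² be its flow (Φ(0,x) = x, ∂Φ/∂s(s,x) = u(Φ(s,x))). Assume each Φ(s,·) is continuously differentiable with spatial derivative D_xΦ(s,x) continuous in (s,x) and differentiable in s with ∂_s D_xΦ(s,x) = Du(Φ(s,x)) ∘ D_xΦ(s,x). Let h₁, h₂ : ℝ² → ℝ be continuously differentiable with compact support. Then the function s ↦ ∫_{ℝ²} (h₁(x) − h₂(Φ(−s,x))·det(D_xΦ(−s,x)))² dx is differentiable at s = 0 with derivative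 ∫_{ℝ²} 2 (h₁(x) − h₂(x)) · div(h₂ u)(x) dx, where div(h₂u) = ∂(h₂u₁)/∂x₁ + ∂(h₂u₂)/∂x₂. -/
open MeasureTheory

/-! ### Auxiliary material on the determinant of maps `ℝ × ℝ →L[ℝ] ℝ × ℝ` -/

/-- Explicit formula for the determinant of a continuous linear map on `ℝ × ℝ`. -/
noncomputable abbrev detF (A : ℝ × ℝ →L[ℝ] ℝ × ℝ) : ℝ :=
  (A (1, 0)).1 * (A (0, 1)).2 - (A (1, 0)).2 * (A (0, 1)).1

/-- Directional derivative of `detF` at `A` in direction `A'`. -/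
noncomputable abbrev detD (A A' : ℝ × ℝ →L[ℝ] ℝ × ℝ) : ℝ :=
  (A' (1, 0)).1 * (A (0, 1)).2 + (A (1, 0)).1 * (A' (0, 1)).2 -
    ((A' (1, 0)).2 * (A (0, 1)).1 + (A (1, 0)).2 * (A' (0, 1)).1)

lemma det_eq_detF (A : ℝ × ℝ →L[ℝ] ℝ × ℝ) : A.det = detF A := by
  rw [ContinuousLinearMap.det, ← LinearMap.det_toMatrix (Module.Basis.finTwoProd ℝ)]
  rw [Matrix.det_fin_two]
  simp [LinearMap.toMatrix_apply, Module.Basis.finTwoProd_zero, Module.Basis.finTwoProd_one,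
    Module.Basis.coe_finTwoProd_repr, detF]
  ring

lemma hasDerivAt_comp_apply {B : ℝ → (ℝ × ℝ →L[ℝ] ℝ × ℝ)} {B'} {σ : ℝ}
    (h : HasDerivAt B B' σ) (v : ℝ × ℝ) :
    HasDerivAt (fun τ => B τ v) (B' v) σ := by
  simpa using h.clm_apply (hasDerivAt_const σ v)

lemma hasDerivAt_comp_apply_fst {B : ℝ → (ℝ × ℝ →L[ℝ] ℝ × ℝ)} {B'} {σ : ℝ}
    (h : HasDerivAt B B' σ) (v : ℝ × ℝ) :
    HasDerivAt (fun τ => (B τ v).1) (B' v).1 σ := by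
  simpa [Function.comp_def] using ((ContinuousLinearMap.fst ℝ ℝ ℝ).hasFDerivAt).comp_hasDerivAt σ
    (hasDerivAt_comp_apply h v)

lemma hasDerivAt_comp_apply_snd {B : ℝ → (ℝ × ℝ →L[ℝ] ℝ × ℝ)} {B'} {σ : ℝ}
    (h : HasDerivAt B B' σ) (v : ℝ × ℝ) :
    HasDerivAt (fun τ => (B τ v).2) (B' v).2 σ := by
  simpa [Function.comp_def] using ((ContinuousLinearMap.snd ℝ ℝ ℝ).hasFDerivAt).comp_hasDerivAt σ
    (hasDerivAt_comp_apply h v)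

lemma hasDerivAt_detF {B : ℝ → (ℝ × ℝ →L[ℝ] ℝ × ℝ)} {B'} {σ : ℝ}
    (h : HasDerivAt B B' σ) :
    HasDerivAt (fun τ => detF (B τ)) (detD (B σ) B') σ := by
  have h1 := hasDerivAt_comp_apply_fst h (1, 0)
  have h2 := hasDerivAt_comp_apply_snd h (1, 0)
  have h3 := hasDerivAt_comp_apply_fst h (0, 1)
  have h4 := hasDerivAt_comp_apply_snd h (0, 1)
  exact (h1.mul h4).sub (h2.mul h3)

lemma continuous_detF : Continuous detF := by
  have h : ∀ v : ℝ × ℝ, Continuous fun A : ℝ × ℝ →L[ℝ] ℝ × ℝ => A v :=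
    fun v => continuous_id.clm_apply continuous_const
  exact (((h (1, 0)).fst.mul (h (0, 1)).snd).sub ((h (1, 0)).snd.mul (h (0, 1)).fst))

lemma continuous_detD :
    Continuous fun p : (ℝ × ℝ →L[ℝ] ℝ × ℝ) × (ℝ × ℝ →L[ℝ] ℝ × ℝ) => detD p.1 p.2 := by
  have h : ∀ v : ℝ × ℝ,
      Continuous fun p : (ℝ × ℝ →L[ℝ] ℝ × ℝ) × (ℝ × ℝ →L[ℝ] ℝ × ℝ) => p.1 v :=
    fun v => continuous_fst.clm_apply continuous_const
  have h' : ∀ v : ℝ × ℝ,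
      Continuous fun p : (ℝ × ℝ →L[ℝ] ℝ × ℝ) × (ℝ × ℝ →L[ℝ] ℝ × ℝ) => p.2 v :=
    fun v => continuous_snd.clm_apply continuous_const
  exact ((((h' (1, 0)).fst.mul (h (0, 1)).snd).add
    ((h (1, 0)).fst.mul (h' (0, 1)).snd)).sub
    (((h' (1, 0)).snd.mul (h (0, 1)).fst).add ((h (1, 0)).snd.mul (h' (0, 1)).fst)))

lemma abs_comp_le (A : ℝ × ℝ →L[ℝ] ℝ × ℝ) (v : ℝ × ℝ) (hv : ‖v‖ = 1) :
    |(A v).1| ≤ ‖A‖ ∧ |(A v).2| ≤ ‖A‖ := by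
  have h := A.le_opNorm v
  rw [hv, mul_one] at h
  exact ⟨le_trans (norm_fst_le (A v)) h, le_trans (norm_snd_le (A v)) h⟩

lemma norm_one_zero : ‖((1 : ℝ), (0 : ℝ))‖ = 1 := by simp [Prod.norm_def]

lemma norm_zero_one : ‖((0 : ℝ), (1 : ℝ))‖ = 1 := by simp [Prod.norm_def]

lemma abs_detF_le (A : ℝ × ℝ →L[ℝ] ℝ × ℝ) : |detF A| ≤ 2 * ‖A‖ ^ 2 := by
  obtain ⟨h1, h2⟩ := abs_comp_le A _ norm_one_zero
  obtain ⟨h3, h4⟩ := abs_comp_le A _ norm_zero_one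
  have e := abs_sub ((A (1, 0)).1 * (A (0, 1)).2) ((A (1, 0)).2 * (A (0, 1)).1)
  rw [abs_mul, abs_mul] at e
  refine e.trans ?_
  nlinarith [abs_nonneg ((A (1, 0)).1), abs_nonneg ((A (1, 0)).2),
    abs_nonneg ((A (0, 1)).1), abs_nonneg ((A (0, 1)).2), norm_nonneg A]

lemma abs_detD_le (A A' : ℝ × ℝ →L[ℝ] ℝ × ℝ) : |detD A A'| ≤ 4 * (‖A‖ * ‖A'‖) := by
  obtain ⟨h1, h2⟩ := abs_comp_le A _ norm_one_zero
  obtain ⟨h3, h4⟩ := abs_comp_le A _ norm_zero_one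
  obtain ⟨g1, g2⟩ := abs_comp_le A' _ norm_one_zero
  obtain ⟨g3, g4⟩ := abs_comp_le A' _ norm_zero_one
  have e := abs_sub ((A' (1, 0)).1 * (A (0, 1)).2 + (A (1, 0)).1 * (A' (0, 1)).2)
    ((A' (1, 0)).2 * (A (0, 1)).1 + (A (1, 0)).2 * (A' (0, 1)).1)
  have e1 := abs_add_le ((A' (1, 0)).1 * (A (0, 1)).2) ((A (1, 0)).1 * (A' (0, 1)).2)
  have e2 := abs_add_le ((A' (1, 0)).2 * (A (0, 1)).1) ((A (1, 0)).2 * (A' (0, 1)).1)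
  rw [abs_mul, abs_mul] at e1 e2
  refine e.trans ?_
  nlinarith [abs_nonneg ((A (1, 0)).1), abs_nonneg ((A (1, 0)).2), abs_nonneg ((A (0, 1)).1),
    abs_nonneg ((A (0, 1)).2), abs_nonneg ((A' (1, 0)).1), abs_nonneg ((A' (1, 0)).2),
    abs_nonneg ((A' (0, 1)).1), abs_nonneg ((A' (0, 1)).2), norm_nonneg A, norm_nonneg A']

lemma abs_mul_le' {a b A B : ℝ} (ha : |a| ≤ A) (hb : |b| ≤ B) : |a * b| ≤ A * B := by
  rw [abs_mul]
  exact mul_le_mul ha hb (abs_nonneg b) ((abs_nonneg a).trans ha)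

lemma fderiv_apply_basis (h₂ : ℝ × ℝ → ℝ) (x : ℝ × ℝ) (u : ℝ × ℝ → ℝ × ℝ) :
    (fderiv ℝ h₂ x) (u x) = (u x).1 * (fderiv ℝ h₂ x) (1, 0)
      + (u x).2 * (fderiv ℝ h₂ x) (0, 1) := by
  have hux : u x = (u x).1 • ((1 : ℝ), (0 : ℝ)) + (u x).2 • ((0 : ℝ), (1 : ℝ)) := by
    ext <;> simp
  calc (fderiv ℝ h₂ x) (u x)
      = (fderiv ℝ h₂ x) ((u x).1 • ((1 : ℝ), (0 : ℝ)) + (u x).2 • ((0 : ℝ), (1 : ℝ))) := by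
        rw [← hux]
    _ = _ := by rw [map_add, (fderiv ℝ h₂ x).map_smul, (fderiv ℝ h₂ x).map_smul]; simp

/-- **First-order expansion of the residual along the flow (2-form / density case).**
Let `u` be a `C¹`, compactly supported autonomous vector field on `ℝ²` with flow
`Φ` (`Φ 0 x = x`, `∂Φ/∂s (s,x) = u (Φ s x)`), whose spatial derivative `DΦ`
depends continuously on `(s,x)` and satisfies the variational equation
`∂ₛ DΦ(s,x) = Du(Φ(s,x)) ∘ DΦ(s,x)`.  Let `h₁, h₂` be `C¹` compactly supported
scalar fields.  Then `s ↦ ∫ (h₁(x) − h₂(Φ(−s,x))·det(DΦ(−s,x)))² dx` is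
differentiable at `s = 0` with derivative
`∫ 2 (h₁(x) − h₂(x)) div(h₂ u)(x) dx`. -/
theorem residual_derivative_along_flow_density
    (u : ℝ × ℝ → ℝ × ℝ) (hu : ContDiff ℝ 1 u) (husupp : HasCompactSupport u)
    (Φ : ℝ → ℝ × ℝ → ℝ × ℝ)
    (hΦ0 : ∀ x, Φ 0 x = x)
    (hΦ : ∀ s x, HasDerivAt (fun σ => Φ σ x) (u (Φ s x)) s)
    (DΦ : ℝ → ℝ × ℝ → (ℝ × ℝ →L[ℝ] ℝ × ℝ))
    (hDΦ : ∀ s x, HasFDerivAt (Φ s) (DΦ s x) x)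
    (hDΦcont : Continuous fun p : ℝ × (ℝ × ℝ) => DΦ p.1 p.2)
    (hDΦs : ∀ s x, HasDerivAt (fun σ => DΦ σ x)
        ((fderiv ℝ u (Φ s x)).comp (DΦ s x)) s)
    (h₁ h₂ : ℝ × ℝ → ℝ)
    (hh₁ : ContDiff ℝ 1 h₁) (hh₂ : ContDiff ℝ 1 h₂)
    (hh₁supp : HasCompactSupport h₁) (hh₂supp : HasCompactSupport h₂) :
    HasDerivAt
      (fun s : ℝ => ∫ x : ℝ × ℝ, (h₁ x - h₂ (Φ (-s) x) * (DΦ (-s) x).det) ^ 2)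
      (∫ x : ℝ × ℝ, 2 * (h₁ x - h₂ x) *
        (pd1 (fun y => h₂ y * (u y).1) x + pd2 (fun y => h₂ y * (u y).2) x))
      0 := by
  classical
  -- basic facts about the flow
  obtain ⟨L, hL⟩ := ContDiff.lipschitzWith_of_hasCompactSupport husupp hu one_ne_zero
  have hfix : ∀ x ∉ tsupport u, ∀ σ : ℝ, Φ σ x = x := by
    intro x hx σ
    have hux : u x = 0 := image_eq_zero_of_notMem_tsupport hx
    have key := ODE_solution_unique_of_mem_Ioo (v := fun _ y => u y) (s := fun _ => Set.univ)
      (K := L) (fun _ _ => hL.lipschitzOnWith)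
      (t₀ := 0) (a := -(|σ| + 1)) (b := |σ| + 1)
      (f := fun τ => Φ τ x) (g := fun _ => x)
      (⟨by linarith [abs_nonneg σ], by linarith [abs_nonneg σ]⟩)
      (fun t _ => ⟨hΦ t x, trivial⟩)
      (fun t _ => ⟨by simpa [hux] using hasDerivAt_const t x, trivial⟩)
      (hΦ0 x)
    exact key ⟨by linarith [neg_abs_le σ], by linarith [le_abs_self σ]⟩
  have hDid : ∀ x ∉ tsupport u, ∀ σ : ℝ, DΦ σ x = ContinuousLinearMap.id ℝ (ℝ × ℝ) := by
    intro x hx σ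
    have hopen : IsOpen (tsupport u)ᶜ := (isClosed_tsupport u).isOpen_compl
    have hev : Φ σ =ᶠ[nhds x] id := by
      filter_upwards [hopen.mem_nhds hx] with y hy
      exact hfix y hy σ
    exact (((hDΦ σ x).congr_of_eventuallyEq hev.symm).unique (hasFDerivAt_id x))
  have hDΦ0 : ∀ x, DΦ 0 x = ContinuousLinearMap.id ℝ (ℝ × ℝ) := by
    intro x
    have h : Φ 0 = id := funext hΦ0
    exact ((h ▸ hDΦ 0 x).unique (hasFDerivAt_id x))
  -- the support set
  set W : Set (ℝ × ℝ) := (tsupport u ∪ tsupport h₁) ∪ tsupport h₂ with hWdef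
  have hWc : IsCompact W := (husupp.union hh₁supp).union hh₂supp
  have hWclosed : IsClosed W :=
    (((isClosed_tsupport u).union (isClosed_tsupport h₁)).union (isClosed_tsupport h₂))
  -- continuity helpers
  have hΦcont : ∀ s : ℝ, Continuous fun x => Φ s x := fun s =>
    continuous_iff_continuousAt.2 fun x => (hDΦ s x).continuousAt
  have hDcont : ∀ s : ℝ, Continuous fun x => DΦ s x := fun s =>
    hDΦcont.comp (continuous_const.prodMk continuous_id)
  have hfdh₂ : Continuous (fderiv ℝ h₂) := hh₂.continuous_fderiv one_ne_zero
  have hfdu : Continuous (fderiv ℝ u) := hu.continuous_fderiv one_ne_zero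
  -- the family of integrands and their `s`-derivatives
  set F : ℝ → ℝ × ℝ → ℝ :=
    fun s x => (h₁ x - h₂ (Φ (-s) x) * detF (DΦ (-s) x)) ^ 2 with hFdef
  set F' : ℝ → ℝ × ℝ → ℝ := fun s x =>
    2 * (h₁ x - h₂ (Φ (-s) x) * detF (DΦ (-s) x)) *
      ((fderiv ℝ h₂ (Φ (-s) x)) (u (Φ (-s) x)) * detF (DΦ (-s) x) +
        h₂ (Φ (-s) x) * detD (DΦ (-s) x) ((fderiv ℝ u (Φ (-s) x)).comp (DΦ (-s) x)))
    with hF'def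
  have hFcont : ∀ s : ℝ, Continuous (F s) := by
    intro s
    exact ((hh₁.continuous.sub ((hh₂.continuous.comp (hΦcont (-s))).mul
      (continuous_detF.comp (hDcont (-s))))).pow 2)
  have hF'cont : ∀ s : ℝ, Continuous (F' s) := by
    intro s
    have c1 : Continuous fun x => h₂ (Φ (-s) x) := hh₂.continuous.comp (hΦcont (-s))
    have c2 : Continuous fun x => detF (DΦ (-s) x) := continuous_detF.comp (hDcont (-s))
    have c3 : Continuous fun x => (fderiv ℝ h₂ (Φ (-s) x)) (u (Φ (-s) x)) :=
      (hfdh₂.comp (hΦcont (-s))).clm_apply (hu.continuous.comp (hΦcont (-s)))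
    have c4 : Continuous fun x =>
        detD (DΦ (-s) x) ((fderiv ℝ u (Φ (-s) x)).comp (DΦ (-s) x)) :=
      continuous_detD.comp ((hDcont (-s)).prodMk
        ((hfdu.comp (hΦcont (-s))).clm_comp (hDcont (-s))))
    exact ((continuous_const.mul (hh₁.continuous.sub (c1.mul c2))).mul
      ((c3.mul c2).add (c1.mul c4)))
  -- global bounds
  obtain ⟨Mu, hMu⟩ := husupp.exists_bound_of_continuous hu.continuous
  obtain ⟨Mdu, hMdu⟩ := (husupp.fderiv (𝕜 := ℝ)).exists_bound_of_continuous hfdu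
  obtain ⟨M1, hM1⟩ := hh₁supp.exists_bound_of_continuous hh₁.continuous
  obtain ⟨M2, hM2⟩ := hh₂supp.exists_bound_of_continuous hh₂.continuous
  obtain ⟨Md2, hMd2⟩ := (hh₂supp.fderiv (𝕜 := ℝ)).exists_bound_of_continuous hfdh₂
  have hMu0 : 0 ≤ Mu := (norm_nonneg _).trans (hMu 0)
  have hMdu0 : 0 ≤ Mdu := (norm_nonneg _).trans (hMdu 0)
  have hM10 : 0 ≤ M1 := (norm_nonneg _).trans (hM1 0)
  have hM20 : 0 ≤ M2 := (norm_nonneg _).trans (hM2 0)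
  have hMd20 : 0 ≤ Md2 := (norm_nonneg _).trans (hMd2 0)
  obtain ⟨M0, hM0⟩ := ((isCompact_Icc (a := (-1 : ℝ)) (b := 1)).prod hWc)
    |>.exists_bound_of_continuousOn hDΦcont.continuousOn
  set M : ℝ := max M0 0 with hMdef
  have hM0' : 0 ≤ M := le_max_right _ _
  have hMB : ∀ s ∈ Metric.ball (0 : ℝ) 1, ∀ x ∈ W, ‖DΦ (-s) x‖ ≤ M := by
    intro s hs x hx
    rw [Metric.mem_ball, dist_zero_right, Real.norm_eq_abs] at hs
    have habs := abs_lt.1 hs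
    refine le_trans (hM0 (-s, x) (Set.mem_prod.2 ⟨Set.mem_Icc.2
      ⟨show (-1 : ℝ) ≤ -s by linarith [habs.2], show -s ≤ (1 : ℝ) by linarith [habs.1]⟩,
      hx⟩)) (le_max_left _ _)
  set C : ℝ :=
    2 * (M1 + M2 * (2 * M ^ 2)) * (Md2 * Mu * (2 * M ^ 2) + M2 * (4 * (M * (Mdu * M))))
    with hCdef
  set bound : ℝ × ℝ → ℝ := W.indicator fun _ => C with hbounddef
  -- pointwise differentiability in `s`
  have hdiff : ∀ (x : ℝ × ℝ) (s : ℝ), HasDerivAt (fun σ => F σ x) (F' s x) s := by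
    intro x s
    have hφ : HasDerivAt (fun σ => Φ (-σ) x) ((-1 : ℝ) • u (Φ (-s) x)) s :=
      (hΦ (-s) x).scomp s (hasDerivAt_neg s)
    have hB : HasDerivAt (fun σ => DΦ (-σ) x)
        ((-1 : ℝ) • (fderiv ℝ u (Φ (-s) x)).comp (DΦ (-s) x)) s :=
      (hDΦs (-s) x).scomp s (hasDerivAt_neg s)
    have hh2φ : HasDerivAt (fun σ => h₂ (Φ (-σ) x))
        ((fderiv ℝ h₂ (Φ (-s) x)) ((-1 : ℝ) • u (Φ (-s) x))) s :=
      ((hh₂.differentiable one_ne_zero (Φ (-s) x)).hasFDerivAt).comp_hasDerivAt s hφ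
    have hdet := hasDerivAt_detF hB
    have hg := hh2φ.mul hdet
    have hfull := ((hasDerivAt_const s (h₁ x)).sub hg).pow 2
    convert (show HasDerivAt (fun σ => F σ x) _ s from hfull) using 1
    simp only [hF'def, ContinuousLinearMap.smul_apply, ContinuousLinearMap.neg_apply,
      Prod.fst_neg, Prod.snd_neg, map_neg, _root_.map_smul, pow_one, smul_eq_mul, neg_smul,
      one_smul, detD, detF, Nat.cast_ofNat, Pi.sub_apply, Pi.mul_apply]
    ring
  -- vanishing outside `W`
  have houtW : ∀ x ∉ W, ∀ s : ℝ, F' s x = 0 := by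
    intro x hx s
    have hxu : x ∉ tsupport u := fun h => hx (Or.inl (Or.inl h))
    have hx1 : x ∉ tsupport h₁ := fun h => hx (Or.inl (Or.inr h))
    have hx2 : x ∉ tsupport h₂ := fun h => hx (Or.inr h)
    have e1 : h₁ x = 0 := image_eq_zero_of_notMem_tsupport hx1
    have e2 : h₂ x = 0 := image_eq_zero_of_notMem_tsupport hx2
    simp [hF'def, hfix x hxu, hDid x hxu, e1, e2]
  -- the dominated-derivative hypotheses
  have hF_meas : ∀ᶠ s in nhds (0 : ℝ), AEStronglyMeasurable (F s) volume :=
    Filter.Eventually.of_forall fun s => (hFcont s).aestronglyMeasurable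
  have hF0supp : HasCompactSupport (F 0) := by
    refine HasCompactSupport.intro hWc ?_
    intro x hx
    have hxu : x ∉ tsupport u := fun h => hx (Or.inl (Or.inl h))
    have hx1 : x ∉ tsupport h₁ := fun h => hx (Or.inl (Or.inr h))
    have hx2 : x ∉ tsupport h₂ := fun h => hx (Or.inr h)
    simp [hFdef, hfix x hxu, hDid x hxu, image_eq_zero_of_notMem_tsupport hx1,
      image_eq_zero_of_notMem_tsupport hx2]
  have hF_int : Integrable (F 0) volume := (hFcont 0).integrable_of_hasCompactSupport hF0supp
  have hF'_meas : AEStronglyMeasurable (F' 0) volume := (hF'cont 0).aestronglyMeasurable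
  have h_bound : ∀ᵐ x ∂(volume : Measure (ℝ × ℝ)),
      ∀ s ∈ Metric.ball (0 : ℝ) 1, ‖F' s x‖ ≤ bound x := by
    refine Filter.Eventually.of_forall fun x s hs => ?_
    by_cases hx : x ∈ W
    · rw [hbounddef, Set.indicator_of_mem hx]
      have hB := hMB s hs x hx
      have hdet : |detF (DΦ (-s) x)| ≤ 2 * M ^ 2 :=
        (abs_detF_le _).trans (by nlinarith [norm_nonneg (DΦ (-s) x)])
      have hcomp : ‖(fderiv ℝ u (Φ (-s) x)).comp (DΦ (-s) x)‖ ≤ Mdu * M :=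
        (ContinuousLinearMap.opNorm_comp_le _ _).trans
          (mul_le_mul (hMdu _) hB (norm_nonneg _) hMdu0)
      have hdetD : |detD (DΦ (-s) x) ((fderiv ℝ u (Φ (-s) x)).comp (DΦ (-s) x))|
          ≤ 4 * (M * (Mdu * M)) := by
        refine (abs_detD_le _ _).trans ?_
        have := mul_le_mul hB hcomp (norm_nonneg _) hM0'
        linarith
      have ha : |h₁ x - h₂ (Φ (-s) x) * detF (DΦ (-s) x)| ≤ M1 + M2 * (2 * M ^ 2) := by
        refine (abs_sub _ _).trans (add_le_add ?_ (abs_mul_le' ?_ hdet))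
        · simpa [Real.norm_eq_abs] using hM1 x
        · simpa [Real.norm_eq_abs] using hM2 (Φ (-s) x)
      have hdh : |(fderiv ℝ h₂ (Φ (-s) x)) (u (Φ (-s) x))| ≤ Md2 * Mu := by
        rw [← Real.norm_eq_abs]
        refine (ContinuousLinearMap.le_opNorm _ _).trans ?_
        exact mul_le_mul (hMd2 _) (hMu _) (norm_nonneg _) hMd20
      have hb : |(fderiv ℝ h₂ (Φ (-s) x)) (u (Φ (-s) x)) * detF (DΦ (-s) x) +
          h₂ (Φ (-s) x) * detD (DΦ (-s) x) ((fderiv ℝ u (Φ (-s) x)).comp (DΦ (-s) x))|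
          ≤ Md2 * Mu * (2 * M ^ 2) + M2 * (4 * (M * (Mdu * M))) := by
        refine (abs_add_le _ _).trans (add_le_add (abs_mul_le' hdh hdet)
          (abs_mul_le' ?_ hdetD))
        simpa [Real.norm_eq_abs] using hM2 (Φ (-s) x)
      have hA0 : (0 : ℝ) ≤ M1 + M2 * (2 * M ^ 2) := (abs_nonneg _).trans ha
      rw [Real.norm_eq_abs, hF'def]
      calc |2 * (h₁ x - h₂ (Φ (-s) x) * detF (DΦ (-s) x)) *
            ((fderiv ℝ h₂ (Φ (-s) x)) (u (Φ (-s) x)) * detF (DΦ (-s) x) +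
              h₂ (Φ (-s) x) * detD (DΦ (-s) x) ((fderiv ℝ u (Φ (-s) x)).comp (DΦ (-s) x)))|
          = 2 * |h₁ x - h₂ (Φ (-s) x) * detF (DΦ (-s) x)| *
            |(fderiv ℝ h₂ (Φ (-s) x)) (u (Φ (-s) x)) * detF (DΦ (-s) x) +
              h₂ (Φ (-s) x) * detD (DΦ (-s) x)
                ((fderiv ℝ u (Φ (-s) x)).comp (DΦ (-s) x))| := by
            rw [abs_mul, abs_mul, abs_two]
        _ ≤ C := by
            rw [hCdef]
            exact mul_le_mul (by linarith) hb (abs_nonneg _) (by linarith)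
    · rw [hbounddef, Set.indicator_of_notMem hx, houtW x hx s]
      simp
  have hbound_int : Integrable bound volume := by
    rw [hbounddef, integrable_indicator_iff hWclosed.measurableSet]
    exact integrableOn_const hWc.measure_lt_top.ne
  have h_diff : ∀ᵐ x ∂(volume : Measure (ℝ × ℝ)),
      ∀ s ∈ Metric.ball (0 : ℝ) 1, HasDerivAt (fun σ => F σ x) (F' s x) s :=
    Filter.Eventually.of_forall fun x s _ => hdiff x s
  have main := (hasDerivAt_integral_of_dominated_loc_of_deriv_le (Metric.ball_mem_nhds 0 one_pos) hF_meas hF_int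
    hF'_meas h_bound hbound_int h_diff).2
  -- identify the function and the value of the derivative
  have hfun : (fun s : ℝ => ∫ x : ℝ × ℝ, (h₁ x - h₂ (Φ (-s) x) * (DΦ (-s) x).det) ^ 2)
      = fun s : ℝ => ∫ x : ℝ × ℝ, F s x := by
    funext s
    simp only [det_eq_detF, hFdef]
  have hval : (∫ x : ℝ × ℝ, F' 0 x)
      = ∫ x : ℝ × ℝ, 2 * (h₁ x - h₂ x) *
        (pd1 (fun y => h₂ y * (u y).1) x + pd2 (fun y => h₂ y * (u y).2) x) := by
    congr 1
    funext x
    have hud := (hu.differentiable one_ne_zero x).hasFDerivAt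
    have h2d := (hh₂.differentiable one_ne_zero x).hasFDerivAt
    have hp1 := (show HasFDerivAt (fun y => h₂ y * (u y).1) _ x from h2d.mul hud.fst).fderiv
    have hp2 := (show HasFDerivAt (fun y => h₂ y * (u y).2) _ x from h2d.mul hud.snd).fderiv
    rw [hF'def]
    simp only [neg_zero, hΦ0, hDΦ0]
    rw [pd1, pd2, hp1, hp2, fderiv_apply_basis h₂ x u]
    simp only [ContinuousLinearMap.add_apply, ContinuousLinearMap.coe_smul', Pi.smul_apply,
      ContinuousLinearMap.coe_comp', Function.comp_apply, ContinuousLinearMap.coe_fst',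
      ContinuousLinearMap.coe_snd', smul_eq_mul, ContinuousLinearMap.comp_id,
      ContinuousLinearMap.id_apply, detD, detF]
    ring
  rw [hfun, ← hval]
  exact main
end
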